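/- If G is a very well-covered graph that has two disjoint maximum independent sets, then G is a bipartite graph with a perfect matching. -/

import Mathlib

open SimpleGraph

variable {V : Type*} [Fintype V] [DecidableEq V]

/-- A set of vertices is independent: no two of its vertices are adjacent. -/
def isIndep (G : SimpleGraph V) (S : Finset V) : Prop :=
  ∀ ⦃a⦄, a ∈ S → ∀ ⦃b⦄, b ∈ S → ¬ G.Adj a b

/-- The independence number `α(G)`. -/
noncomputable def indepNumF (G : SimpleGraph V) : ℕ :=
  sSup {n | ∃ S : Finset V, isIndep G S ∧ S.card = n}

/-- A maximum independent set: an independent set of size `α(G)`. -/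
def isMaxIndep (G : SimpleGraph V) (S : Finset V) : Prop :=
  isIndep G S ∧ S.card = indepNumF G

/-- `G` has two disjoint maximum independent sets. -/
def hasTwoDisjointMaxIndep (G : SimpleGraph V) : Prop :=
  ∃ S₁ S₂ : Finset V, isMaxIndep G S₁ ∧ isMaxIndep G S₂ ∧ Disjoint S₁ S₂

/-- A matching: a set of edges of `G`, pairwise sharing no vertex. -/
def isMatchingF (G : SimpleGraph V) (M : Finset (Sym2 V)) : Prop :=
  (∀ e ∈ M, e ∈ G.edgeSet) ∧
  (∀ e ∈ M, ∀ f ∈ M, e ≠ f → ∀ v : V, v ∈ e → v ∉ f)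

/-- The matching number `μ(G)`. -/
noncomputable def matchNum (G : SimpleGraph V) : ℕ :=
  sSup {n | ∃ M : Finset (Sym2 V), isMatchingF G M ∧ M.card = n}

/-- A shedding vertex: for every independent set `S` of `G − N[v]` there is a
neighbor `u` of `v` with `S ∪ {u}` independent. -/
def IsShedding (G : SimpleGraph V) (v : V) : Prop :=
  ∀ S : Finset V, isIndep G S → (∀ w ∈ S, w ≠ v ∧ ¬ G.Adj v w) →
    ∃ u, G.Adj v u ∧ isIndep G (insert u S)

/-- A perfect matching of `G`: a matching covering every vertex. -/
def hasPerfectMatchingF (G : SimpleGraph V) : Prop :=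
  ∃ M : Finset (Sym2 V), isMatchingF G M ∧ ∀ v : V, ∃ e ∈ M, v ∈ e

/-- The disjoint union of `k` copies of `K₂`. -/
def copiesK2 (k : ℕ) : SimpleGraph (Fin k × Fin 2) :=
  SimpleGraph.fromRel (fun p q => p.1 = q.1)

lemma indep_card_le (G : SimpleGraph V) {S : Finset V} (hS : isIndep G S) :
    S.card ≤ indepNumF G := by
  apply le_csSup
  · exact ⟨Fintype.card V, fun n ⟨T, _, hT⟩ => hT ▸ T.card_le_univ⟩
  · exact ⟨S, hS, rfl⟩

/-- A very well-covered graph with two disjoint maximum independent sets is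
bipartite with a perfect matching. -/
theorem stmt12 (G : SimpleGraph V)
    (hiso : ∀ v : V, ∃ u : V, G.Adj v u)
    (hwc : ∀ S : Finset V, isIndep G S → (∀ v ∉ S, ¬ isIndep G (insert v S)) →
      S.card = indepNumF G)
    (hvwc : Fintype.card V = 2 * indepNumF G)
    (h : hasTwoDisjointMaxIndep G) :
    G.Colorable 2 ∧ hasPerfectMatchingF G := by
  classical
  obtain ⟨S₁, S₂, ⟨hI₁, hc₁⟩, ⟨hI₂, hc₂⟩, hdisj⟩ := h
  have hunion : S₁ ∪ S₂ = Finset.univ := by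
    apply Finset.eq_univ_of_card
    rw [Finset.card_union_of_disjoint hdisj, hc₁, hc₂]
    omega
  have hmem : ∀ v : V, v ∈ S₁ ∨ v ∈ S₂ := fun v => by
    have : v ∈ S₁ ∪ S₂ := hunion ▸ Finset.mem_univ v
    exact Finset.mem_union.mp this
  -- 2-colorability
  have hcol : G.Colorable 2 := by
    refine ⟨SimpleGraph.Coloring.mk (fun v => if v ∈ S₁ then 0 else 1) ?_⟩
    intro a b hab heq
    by_cases ha : a ∈ S₁ <;> by_cases hb : b ∈ S₁ <;> simp [ha, hb] at heq
    · exact hI₁ ha hb hab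
    · have ha2 : a ∈ S₂ := (hmem a).resolve_left ha
      have hb2 : b ∈ S₂ := (hmem b).resolve_left hb
      exact hI₂ ha2 hb2 hab
  refine ⟨hcol, ?_⟩
  -- Hall's theorem setup
  set t : ↥S₁ → Finset V := fun v => S₂.filter (fun w => G.Adj v.1 w) with ht
  have hall : ∀ A : Finset ↥S₁, A.card ≤ (A.biUnion t).card := by
    intro A
    set A' : Finset V := A.image Subtype.val with hA'
    set N : Finset V := A.biUnion t with hN
    have hA'S₁ : A' ⊆ S₁ := by
      intro x hx
      obtain ⟨v, _, rfl⟩ := Finset.mem_image.mp hx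
      exact v.2
    have hNS₂ : N ⊆ S₂ := by
      intro x hx
      obtain ⟨v, _, hv⟩ := Finset.mem_biUnion.mp hx
      exact (Finset.mem_filter.mp hv).1
    have hadjN : ∀ a ∈ A', ∀ b, G.Adj a b → b ∈ S₂ → b ∈ N := by
      intro a ha b hab hb
      obtain ⟨v, hv, rfl⟩ := Finset.mem_image.mp ha
      exact Finset.mem_biUnion.mpr ⟨v, hv, Finset.mem_filter.mpr ⟨hb, hab⟩⟩
    have hTindep : isIndep G ((S₂ \ N) ∪ A') := by
      intro a ha b hb hab
      rcases Finset.mem_union.mp ha with ha | ha <;>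
        rcases Finset.mem_union.mp hb with hb | hb
      · exact hI₂ (Finset.mem_sdiff.mp ha).1 (Finset.mem_sdiff.mp hb).1 hab
      · exact (Finset.mem_sdiff.mp ha).2 (hadjN b hb a hab.symm (Finset.mem_sdiff.mp ha).1)
      · exact (Finset.mem_sdiff.mp hb).2 (hadjN a ha b hab (Finset.mem_sdiff.mp hb).1)
      · exact hI₁ (hA'S₁ ha) (hA'S₁ hb) hab
    have hTcard : ((S₂ \ N) ∪ A').card = S₂.card - N.card + A'.card := by
      rw [Finset.card_union_of_disjoint, Finset.card_sdiff_of_subset hNS₂]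
      exact Finset.disjoint_of_subset_left (Finset.sdiff_subset) 
        (Finset.disjoint_of_subset_right hA'S₁ hdisj.symm)
    have hle : ((S₂ \ N) ∪ A').card ≤ indepNumF G := indep_card_le G hTindep
    have hNle : N.card ≤ S₂.card := Finset.card_le_card hNS₂
    have hA'c : A'.card = A.card := Finset.card_image_of_injective _ Subtype.val_injective
    rw [hTcard, hA'c] at hle
    rw [hc₂] at hNle hle
    omega
  obtain ⟨f, hfinj, hf⟩ := (Finset.all_card_le_biUnion_card_iff_exists_injective t).mp hall
  have hfS₂ : ∀ v, f v ∈ S₂ := fun v => (Finset.mem_filter.mp (hf v)).1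
  have hfadj : ∀ v : ↥S₁, G.Adj v.1 (f v) := fun v => (Finset.mem_filter.mp (hf v)).2
  have himg : Finset.univ.image f = S₂ := by
    apply Finset.eq_of_subset_of_card_le
    · intro x hx
      obtain ⟨v, _, rfl⟩ := Finset.mem_image.mp hx
      exact hfS₂ v
    · rw [Finset.card_image_of_injective _ hfinj, Finset.card_univ, Fintype.card_coe,
        hc₁, hc₂]
  set M : Finset (Sym2 V) := Finset.univ.image (fun v : ↥S₁ => s(v.1, f v)) with hM
  have hS₁S₂ : ∀ x, x ∈ S₁ → x ∈ S₂ → False := fun x h1 h2 =>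
    Finset.disjoint_left.mp hdisj h1 h2
  refine ⟨M, ⟨?_, ?_⟩, ?_⟩
  · intro e he
    obtain ⟨v, _, rfl⟩ := Finset.mem_image.mp he
    exact (G.mem_edgeSet).mpr (hfadj v)
  · intro e he e' he' hne x hx hx'
    obtain ⟨v, _, rfl⟩ := Finset.mem_image.mp he
    obtain ⟨w, _, rfl⟩ := Finset.mem_image.mp he'
    rcases Sym2.mem_iff.mp hx with rfl | rfl <;>
      rcases Sym2.mem_iff.mp hx' with h2 | h2
    · exact hne (by rw [Subtype.ext h2.symm])
    · exact hS₁S₂ _ v.2 (h2 ▸ hfS₂ w)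
    · exact hS₁S₂ _ (h2 ▸ w.2) (hfS₂ v)
    · exact hne (by rw [hfinj h2.symm])
  · intro v
    rcases hmem v with hv | hv
    · exact ⟨s(v, f ⟨v, hv⟩), Finset.mem_image.mpr ⟨⟨v, hv⟩, Finset.mem_univ _, rfl⟩,
        Sym2.mem_mk_left _ _⟩
    · obtain ⟨w, _, hw⟩ := Finset.mem_image.mp (himg ▸ hv)
      exact ⟨s(w.1, f w), Finset.mem_image.mpr ⟨w, Finset.mem_univ _, rfl⟩,
        hw ▸ Sym2.mem_mk_right _ _⟩
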